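/- With φ([a,b]) = diag(a,b), if X = [x₁,x₂] and Y = [y₁,y₂] are compact intervals with x₂ ≤ 0 and y₂ ≤ 0, then φ(X·Y) = diag(x₂,x₁)·diag(y₂,y₁), i.e., φ(X·Y) equals the product of the matrices of the switched intervals. -/
import Mathlib


open scoped Pointwise

/-- φ maps the interval [a,b] to the diagonal matrix diag(a,b). -/
noncomputable def phi (a b : ℝ) : Matrix (Fin 2) (Fin 2) ℝ :=
  Matrix.diagonal ![a, b]

lemma Icc_mul_Icc_nonpos (x₁ x₂ y₁ y₂ : ℝ) (hx : x₁ ≤ x₂) (hy : y₁ ≤ y₂)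
    (hx2 : x₂ ≤ 0) (hy2 : y₂ ≤ 0) :
    Set.Icc x₁ x₂ * Set.Icc y₁ y₂ = Set.Icc (x₂ * y₂) (x₁ * y₁) := by
  ext z
  constructor
  · rintro ⟨p, ⟨hp1, hp2⟩, q, ⟨hq1, hq2⟩, rfl⟩
    refine ⟨?_, ?_⟩
    · show x₂ * y₂ ≤ p * q; nlinarith
    · show p * q ≤ x₁ * y₁; nlinarith
  · rintro ⟨hz1, hz2⟩
    rcases le_or_gt z (x₂ * y₁) with hcase | hcase
    · rcases eq_or_lt_of_le hx2 with h0 | h0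
      · -- x₂ = 0
        have hz0 : z = 0 := by nlinarith
        exact ⟨x₂, ⟨hx, le_refl _⟩, y₂, ⟨hy, le_refl _⟩, by show x₂ * y₂ = z; rw [h0, hz0]; ring⟩
      · refine ⟨x₂, ⟨hx, le_refl _⟩, z / x₂, ⟨?_, ?_⟩, ?_⟩
        · rw [le_div_iff_of_neg h0]; linarith [mul_comm y₁ x₂]
        · rw [div_le_iff_of_neg h0]; linarith [mul_comm y₂ x₂]
        · show x₂ * (z / x₂) = z
          rw [mul_comm]; exact div_mul_cancel₀ z h0.ne
    · rcases eq_or_lt_of_le hy2 with h0 | h0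
      ·
        -- then x₂*y₂ = 0 ≤ z, and z < x₂*y₁ is false? use y₁ case
        rcases eq_or_lt_of_le (hy.trans hy2) with h1 | h1
        · have hz0 : z = 0 := by nlinarith
          exact ⟨x₂, ⟨hx, le_refl _⟩, y₂, ⟨hy, le_refl _⟩, by show x₂ * y₂ = z; rw [h0, hz0]; ring⟩
        · refine ⟨z / y₁, ⟨?_, ?_⟩, y₁, ⟨le_refl _, hy⟩, ?_⟩
          · rw [le_div_iff_of_neg h1]; linarith
          · rw [div_le_iff_of_neg h1]; linarith
          · show z / y₁ * y₁ = z
            exact div_mul_cancel₀ z h1.ne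
      · rcases lt_or_ge y₁ 0 with h1 | h1
        · refine ⟨z / y₁, ⟨?_, ?_⟩, y₁, ⟨le_refl _, hy⟩, ?_⟩
          · rw [le_div_iff_of_neg h1]; linarith
          · rw [div_le_iff_of_neg h1]; linarith
          · show z / y₁ * y₁ = z
            exact div_mul_cancel₀ z h1.ne
        · exfalso; nlinarith

theorem phi_mul_nonpos (x₁ x₂ y₁ y₂ s t : ℝ) (hx : x₁ ≤ x₂) (hy : y₁ ≤ y₂)
    (hx2 : x₂ ≤ 0) (hy2 : y₂ ≤ 0)
    (h : Set.Icc x₁ x₂ * Set.Icc y₁ y₂ = Set.Icc s t) :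
    phi s t = phi x₂ x₁ * phi y₂ y₁ := by
  rw [Icc_mul_Icc_nonpos x₁ x₂ y₁ y₂ hx hy hx2 hy2] at h
  have hle : x₂ * y₂ ≤ x₁ * y₁ := by nlinarith
  have h1 : (x₂ * y₂) ∈ Set.Icc s t := by rw [← h]; exact Set.left_mem_Icc.2 hle
  have h2 : s ∈ Set.Icc (x₂ * y₂) (x₁ * y₁) := by
    rw [h]; exact Set.left_mem_Icc.2 (h1.1.trans h1.2)
  have h3 : (x₁ * y₁) ∈ Set.Icc s t := by rw [← h]; exact Set.right_mem_Icc.2 hle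
  have h4 : t ∈ Set.Icc (x₂ * y₂) (x₁ * y₁) := by
    rw [h]; exact Set.right_mem_Icc.2 (h1.1.trans h1.2)
  have hs : s = x₂ * y₂ := le_antisymm h1.1 h2.1
  have ht : t = x₁ * y₁ := le_antisymm h4.2 h3.2
  subst hs ht
  unfold phi
  rw [Matrix.diagonal_mul_diagonal]
  have hv : (fun i => ![x₂, x₁] i * ![y₂, y₁] i) = ![x₂ * y₂, x₁ * y₁] := by
    funext i; fin_cases i <;> simp
  rw [hv]
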